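/- For every bounded claim H ∈ L^∞(P), the process of super-hedging prices (E_t(H))_{t=0,...,T} is a supermartingale under every equivalent martingale measure Q ∈ M_e: E_Q[E_{t+1}(H) | F_t] ≤ E_t(H) for all t. -/

import Mathlib

open MeasureTheory Filter

variable {Ω : Type*}

/-- A self-financing trading strategy: `ξ k` (the position held over `(k-1, k]`) is
`F_{k-1}`-measurable. -/
def Predictable {m : MeasurableSpace Ω} {d : ℕ} (F : Filtration ℕ m)
    (ξ : ℕ → Ω → Fin d → ℝ) : Prop :=
  ∀ k : ℕ, 1 ≤ k → Measurable[F (k - 1)] (ξ k)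

/-- Gains from trading with strategy `ξ` in `X` from time `t` to time `T`:
`G_t(ξ) = ∑_{k=t+1}^T ξ_k · (X_k - X_{k-1})`. -/
def Gains {d : ℕ} (X ξ : ℕ → Ω → Fin d → ℝ) (t T : ℕ) (ω : Ω) : ℝ :=
  ∑ k ∈ Finset.Icc (t + 1) T, ∑ i, ξ k ω i * (X k ω i - X (k - 1) ω i)

/-- `Q` is an equivalent martingale measure for the price process `X` on `{0,…,T}`:
`Q` is a probability measure equivalent to `P` under which each component of `X` is
integrable and a martingale. -/
def IsEMM {m : MeasurableSpace Ω} {d : ℕ} (P Q : Measure Ω) (F : Filtration ℕ m)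
    (X : ℕ → Ω → Fin d → ℝ) (T : ℕ) : Prop :=
  IsProbabilityMeasure Q ∧ (∀ A : Set Ω, P A = 0 ↔ Q A = 0) ∧
    (∀ t, t ≤ T → ∀ i, Integrable (fun ω => X t ω i) Q) ∧
    (∀ t, t < T → ∀ i,
      (Q[(fun ω => X (t + 1) ω i)|F t]) =ᵐ[Q] fun ω => X t ω i)

/-- The set of super-hedging prices at time `t` for the claim `H`. -/
def SuperPrices {m : MeasurableSpace Ω} {d : ℕ} (P : Measure Ω)
    (F : Filtration ℕ m) (X : ℕ → Ω → Fin d → ℝ) (T t : ℕ) (H : Ω → ℝ) :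
    Set (Ω → ℝ) :=
  {g | Measurable[F t] g ∧ ∃ ξ, Predictable F ξ ∧
    ∀ᵐ ω ∂P, H ω ≤ g ω + Gains X ξ t T ω}

/-- The set of sub-hedging prices at time `t` for the claim `H`. -/
def SubPrices {m : MeasurableSpace Ω} {d : ℕ} (P : Measure Ω)
    (F : Filtration ℕ m) (X : ℕ → Ω → Fin d → ℝ) (T t : ℕ) (H : Ω → ℝ) :
    Set (Ω → ℝ) :=
  {g | Measurable[F t] g ∧ ∃ ξ, Predictable F ξ ∧
    ∀ᵐ ω ∂P, g ω + Gains X ξ t T ω ≤ H ω}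

/-- The set of conditional expectations `E_Q[H | F_t]` over `Q ∈ M_e`. -/
def MPrices {m : MeasurableSpace Ω} {d : ℕ} (P : Measure Ω)
    (F : Filtration ℕ m) (X : ℕ → Ω → Fin d → ℝ) (T t : ℕ) (H : Ω → ℝ) :
    Set (Ω → ℝ) :=
  {f | ∃ Q : Measure Ω, IsEMM P Q F X T ∧ f = Q[H|F t]}

/-- `g` is a `P`-a.e. upper bound of the family `S`. -/
def IsAEUpperBound {_m : MeasurableSpace Ω} (P : Measure Ω)
    (S : Set (Ω → ℝ)) (g : Ω → ℝ) : Prop :=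
  ∀ f ∈ S, f ≤ᵐ[P] g

/-- `g` is a `P`-a.e. lower bound of the family `S`. -/
def IsAELowerBound {_m : MeasurableSpace Ω} (P : Measure Ω)
    (S : Set (Ω → ℝ)) (g : Ω → ℝ) : Prop :=
  ∀ f ∈ S, g ≤ᵐ[P] f

/-- `g` is (a version of) the essential supremum of the family `S` under `P`. -/
def IsEssSupOf {_m : MeasurableSpace Ω} (P : Measure Ω)
    (S : Set (Ω → ℝ)) (g : Ω → ℝ) : Prop :=
  IsAEUpperBound P S g ∧ ∀ h, IsAEUpperBound P S h → g ≤ᵐ[P] h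

/-- `g` is (a version of) the essential infimum of the family `S` under `P`. -/
def IsEssInfOf {_m : MeasurableSpace Ω} (P : Measure Ω)
    (S : Set (Ω → ℝ)) (g : Ω → ℝ) : Prop :=
  IsAELowerBound P S g ∧ ∀ h, IsAELowerBound P S h → h ≤ᵐ[P] g


/-- One-step lemma: if `W + ζ·Y ≥ -c` a.s. where `W, ζ` are `F k`-measurable and `Y` has zero
conditional expectation given `F k`, then `W ≥ -c` a.s. -/
lemma one_step_lemma {m : MeasurableSpace Ω} {d : ℕ} (F : Filtration ℕ m)
    (Q : Measure Ω) [IsProbabilityMeasure Q] (k : ℕ)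
    (W : Ω → ℝ) (hW : Measurable[F k] W)
    (ζ : Ω → Fin d → ℝ) (hζ : Measurable[F k] ζ)
    (Y : Ω → Fin d → ℝ)
    (hYint : ∀ i, Integrable (fun ω => Y ω i) Q)
    (hY0 : ∀ i, (Q[(fun ω => Y ω i)|F k]) =ᵐ[Q] 0)
    (c : ℝ) (hbd : ∀ᵐ ω ∂Q, -c ≤ W ω + ∑ i, ζ ω i * Y ω i) :
    ∀ᵐ ω ∂Q, -c ≤ W ω := by
  have hζi : ∀ i, Measurable[F k] fun ω => ζ ω i := fun i => (measurable_pi_apply i).comp hζ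
  -- the bad sets
  set A : ℕ → Set Ω := fun n => {ω | W ω < -c ∧ ∀ i, ζ ω i ∈ Set.Icc (-(n:ℝ)) n} with hA
  have hAmeas : ∀ n, MeasurableSet[F k] (A n) := by
    intro n
    have h1 : MeasurableSet[F k] {ω | W ω < -c} := hW measurableSet_Iio
    have h2 : ∀ i, MeasurableSet[F k] {ω | ζ ω i ∈ Set.Icc (-(n:ℝ)) n} :=
      fun i => (hζi i) measurableSet_Icc
    have hAe : A n = {ω | W ω < -c} ∩ ⋂ i, {ω | ζ ω i ∈ Set.Icc (-(n:ℝ)) n} := by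
      ext ω; simp [hA, Set.mem_iInter]
    rw [hAe]
    exact h1.inter (MeasurableSet.iInter fun i => h2 i)
  have hAnull : ∀ n : ℕ, ∀ᵐ ω ∂Q, ω ∉ A n := by
    intro n
    -- the strategy 1_{A n} ζ
    set φ : Fin d → Ω → ℝ := fun i => (A n).indicator (fun ω => ζ ω i) with hφ
    have hφmeas : ∀ i, StronglyMeasurable[F k] (φ i) :=
      fun i => ((hζi i).indicator (hAmeas n)).stronglyMeasurable
    have hφbdd : ∀ i, ∀ ω, ‖φ i ω‖ ≤ n := by
      intro i ω
      by_cases hω : ω ∈ A n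
      · simp only [hφ, Set.indicator_of_mem hω]
        have := hω.2 i
        rw [Set.mem_Icc] at this
        rw [Real.norm_eq_abs, abs_le]
        exact this
      · simp [hφ, Set.indicator_of_notMem hω, Nat.cast_nonneg]
    have hterm_int : ∀ i, Integrable (fun ω => φ i ω * Y ω i) Q := fun i =>
      (hYint i).bdd_mul ((hφmeas i).mono (F.le k)).aestronglyMeasurable (ae_of_all _ (hφbdd i))
    have hcond : ∀ i, (Q[(fun ω => φ i ω * Y ω i)|F k]) =ᵐ[Q] 0 := by
      intro i
      have h1 := condExp_mul_of_stronglyMeasurable_left (hφmeas i) (hterm_int i) (hYint i)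
      refine h1.trans ?_
      filter_upwards [hY0 i] with ω hω
      simp [hω]
    have hint0 : ∀ i, ∫ ω, φ i ω * Y ω i ∂Q = 0 := by
      intro i
      rw [← integral_condExp (F.le k)]
      rw [integral_congr_ae (hcond i)]
      simp
    -- the total gain is nonnegative a.e. with zero integral
    set gn : Ω → ℝ := fun ω => ∑ i, φ i ω * Y ω i with hgn
    have hgn_int : Integrable gn Q := integrable_finset_sum _ fun i _ => hterm_int i
    have hgn_zero : ∫ ω, gn ω ∂Q = 0 := by
      rw [hgn]
      rw [integral_finset_sum _ fun i _ => hterm_int i]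
      simp [hint0]
    have hgn_nonneg : 0 ≤ᵐ[Q] gn := by
      filter_upwards [hbd] with ω hω
      by_cases hωA : ω ∈ A n
      · have h1 : gn ω = ∑ i, ζ ω i * Y ω i := by
          apply Finset.sum_congr rfl
          intro i _
          simp [hφ, Set.indicator_of_mem hωA]
        have h2 : -c - W ω ≤ ∑ i, ζ ω i * Y ω i := by linarith
        have h3 : 0 < -c - W ω := by have := hωA.1; linarith
        simp only [Pi.zero_apply]
        rw [h1]; linarith
      · have h1 : gn ω = 0 := by
          apply Finset.sum_eq_zero
          intro i _
          simp [hφ, Set.indicator_of_notMem hωA]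
        simp [h1]
    have hgn_eq0 : gn =ᵐ[Q] 0 := by
      exact (integral_eq_zero_iff_of_nonneg_ae hgn_nonneg hgn_int).mp hgn_zero
    filter_upwards [hbd, hgn_eq0] with ω hω hgn0
    intro hωA
    have h1 : gn ω = ∑ i, ζ ω i * Y ω i := by
      apply Finset.sum_congr rfl
      intro i _
      simp [hφ, Set.indicator_of_mem hωA]
    have h3 : 0 < -c - W ω := by have := hωA.1; linarith
    have h2 : -c - W ω ≤ ∑ i, ζ ω i * Y ω i := by linarith
    rw [Pi.zero_apply] at hgn0
    rw [h1] at hgn0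
    linarith
  have hAall : ∀ᵐ ω ∂Q, ∀ n : ℕ, ω ∉ A n := ae_all_iff.mpr hAnull
  filter_upwards [hAall] with ω hω
  by_contra hcon
  push_neg at hcon
  obtain ⟨n, hn⟩ : ∃ n : ℕ, ∀ i, |ζ ω i| ≤ n := by
    refine ⟨⌈∑ i, |ζ ω i|⌉₊, fun i => ?_⟩
    have h1 : |ζ ω i| ≤ ∑ j, |ζ ω j| :=
      Finset.single_le_sum (f := fun j => |ζ ω j|) (fun j _ => abs_nonneg _) (Finset.mem_univ i)
    have h2 : (∑ j, |ζ ω j|) ≤ (⌈∑ j, |ζ ω j|⌉₊ : ℝ) := Nat.le_ceil _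
    linarith
  exact hω n ⟨hcon, fun i => Set.mem_Icc.mpr (abs_le.mp (hn i))⟩

/-- Members of `SuperPrices` are bounded below by `-c` if `H` is, a.e. -/
lemma superprice_bounded_below {m : MeasurableSpace Ω} {d : ℕ} (F : Filtration ℕ m)
    (P Q : Measure Ω) [IsProbabilityMeasure P]
    (X : ℕ → Ω → Fin d → ℝ) (hX : ∀ t, Measurable[F t] (X t)) (T : ℕ)
    (hQ : IsEMM P Q F X T) (H : Ω → ℝ) (c : ℝ) (hHb : ∀ᵐ ω ∂P, -c ≤ H ω)
    (s : ℕ) (hs : s ≤ T) (f : Ω → ℝ) (hf : f ∈ SuperPrices P F X T s H) :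
    ∀ᵐ ω ∂P, -c ≤ f ω := by
  obtain ⟨hfm, ξ, hξ, hsup⟩ := hf
  obtain ⟨hQprob, hQequiv, hQint, hQmart⟩ := hQ
  haveI := hQprob
  have hPQ : P ≪ Q := Measure.AbsolutelyContinuous.mk fun A _ hA => (hQequiv A).mpr hA
  have hQP : Q ≪ P := Measure.AbsolutelyContinuous.mk fun A _ hA => (hQequiv A).mp hA
  have hHbQ : ∀ᵐ ω ∂Q, -c ≤ H ω := hQP.ae_le hHb
  have hsupQ : ∀ᵐ ω ∂Q, H ω ≤ f ω + Gains X ξ s T ω := hQP.ae_le hsup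
  set V : ℕ → Ω → ℝ := fun k ω =>
    f ω + ∑ j ∈ Finset.Icc (s + 1) k, ∑ i, ξ j ω i * (X j ω i - X (j - 1) ω i) with hV
  have hVmeas : ∀ k, s ≤ k → Measurable[F k] (V k) := by
    intro k hk
    apply Measurable.add (hfm.mono (F.mono hk) le_rfl)
    apply Finset.measurable_sum
    intro j hj
    rw [Finset.mem_Icc] at hj
    apply Finset.measurable_sum
    intro i _
    have hξj : Measurable[F k] (ξ j) :=
      (hξ j (by omega)).mono (F.mono (by omega : j - 1 ≤ k)) le_rfl
    have hξji : Measurable[F k] fun ω => ξ j ω i := (measurable_pi_apply i).comp hξj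
    have hXj : Measurable[F k] fun ω => X j ω i :=
      (measurable_pi_apply i).comp ((hX j).mono (F.mono (by omega : j ≤ k)) le_rfl)
    have hXj1 : Measurable[F k] fun ω => X (j - 1) ω i :=
      (measurable_pi_apply i).comp ((hX (j - 1)).mono (F.mono (by omega : j - 1 ≤ k)) le_rfl)
    exact hξji.mul (hXj.sub hXj1)
  have claim : ∀ n k, s ≤ k → k + n = T → ∀ᵐ ω ∂Q, -c ≤ V k ω := by
    intro n
    induction n with
    | zero =>
      intro k hk hkT
      have hkT' : k = T := by omega
      subst hkT'
      filter_upwards [hHbQ, hsupQ] with ω h1 h2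
      exact le_trans h1 h2
    | succ n ih =>
      intro k hk hkT
      have hprev := ih (k + 1) (by omega) (by omega)
      have hstep : ∀ ω, V (k + 1) ω = V k ω + ∑ i, ξ (k + 1) ω i * (X (k + 1) ω i - X k ω i) := by
        intro ω
        rw [hV]
        simp only
        rw [Finset.sum_Icc_succ_top (by omega : s + 1 ≤ k + 1)]
        simp only [Nat.add_sub_cancel]
        ring
      have hζm : Measurable[F k] (ξ (k + 1)) := by
        have := hξ (k + 1) (by omega)
        simpa using this
      have hYint : ∀ i, Integrable (fun ω => X (k + 1) ω i - X k ω i) Q := fun i =>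
        (hQint (k + 1) (by omega) i).sub (hQint k (by omega) i)
      have hY0 : ∀ i, (Q[(fun ω => X (k + 1) ω i - X k ω i)|F k]) =ᵐ[Q] 0 := by
        intro i
        have h1 : (Q[(fun ω => X (k + 1) ω i - X k ω i)|F k]) =ᵐ[Q]
            (Q[(fun ω => X (k + 1) ω i)|F k]) - (Q[(fun ω => X k ω i)|F k]) :=
          condExp_sub (hQint (k + 1) (by omega) i) (hQint k (by omega) i) _
        have h2 : (Q[(fun ω => X k ω i)|F k]) = fun ω => X k ω i :=
          condExp_of_stronglyMeasurable (F.le k)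
            (((measurable_pi_apply i).comp (hX k)).stronglyMeasurable)
            (hQint k (by omega) i)
        have h3 := hQmart k (by omega) i
        filter_upwards [h1, h3] with ω hω1 hω3
        rw [Pi.zero_apply, hω1, Pi.sub_apply, h2, hω3]
        ring
      have hbd : ∀ᵐ ω ∂Q, -c ≤ V k ω + ∑ i, ξ (k + 1) ω i * (X (k + 1) ω i - X k ω i) := by
        filter_upwards [hprev] with ω hω
        rw [← hstep]
        exact hω
      exact one_step_lemma F Q k (V k) (hVmeas k hk) (ξ (k + 1)) hζm
        (fun ω i => X (k + 1) ω i - X k ω i) hYint hY0 c hbd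
  have hfinal := claim (T - s) s le_rfl (by omega)
  have hVs : ∀ ω, V s ω = f ω := by
    intro ω
    rw [hV]
    simp [Finset.Icc_eq_empty_of_lt (by omega : s < s + 1)]
  rw [show (fun ω => -c ≤ V s ω) = fun ω => -c ≤ f ω from funext fun ω => by rw [hVs]] at hfinal
  exact hPQ.ae_le hfinal


/-- A measurable version of the essential infimum of the super-hedging prices exists,
bounded by `C`. -/
lemma exists_measurable_essinf {m : MeasurableSpace Ω} {d : ℕ} (F : Filtration ℕ m)
    (P Q : Measure Ω) [IsProbabilityMeasure P]
    (X : ℕ → Ω → Fin d → ℝ) (hX : ∀ t, Measurable[F t] (X t)) (T : ℕ)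
    (hQ : IsEMM P Q F X T) (H : Ω → ℝ) (C : ℝ) (hC : 0 ≤ C)
    (hHb : ∀ᵐ ω ∂P, |H ω| ≤ C) (s : ℕ) (hs : s ≤ T) :
    ∃ h : Ω → ℝ, Measurable h ∧ (∀ ω, |h ω| ≤ C) ∧
      IsEssInfOf P (SuperPrices P F X T s H) h := by
  classical
  set S := SuperPrices P F X T s H with hSdef
  have hHb' : ∀ᵐ ω ∂P, -C ≤ H ω := by
    filter_upwards [hHb] with ω hω; linarith [(abs_le.mp hω).1]
  -- the constant C is a super-hedging price
  have hCin : (fun _ : Ω => C) ∈ S := by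
    refine ⟨measurable_const, fun _ _ _ => 0, fun k hk => measurable_const, ?_⟩
    filter_upwards [hHb] with ω hω
    have h1 : Gains X (fun _ _ _ => 0) s T ω = 0 := by simp [Gains]
    rw [h1]
    linarith [(abs_le.mp hω).2]
  -- all super-hedging prices are bounded below by -C
  have hlb : ∀ f ∈ S, ∀ᵐ ω ∂P, -C ≤ f ω := fun f hf =>
    superprice_bounded_below F P Q X hX T hQ H C hHb' s hs f hf
  have hSm : ∀ f ∈ S, Measurable f := fun f hf => hf.1.mono (F.le s) le_rfl
  -- S is stable under min
  have hmin : ∀ f1 f2, f1 ∈ S → f2 ∈ S → (fun ω => min (f1 ω) (f2 ω)) ∈ S := by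
    rintro f1 f2 ⟨h1m, ξ1, hξ1, hs1⟩ ⟨h2m, ξ2, hξ2, hs2⟩
    have hsetS : MeasurableSet[F s] {ω | f1 ω ≤ f2 ω} := by
      have h0 : MeasurableSet[F s] ((fun ω => f2 ω - f1 ω) ⁻¹' Set.Ici 0) :=
        (h2m.sub h1m) measurableSet_Ici
      have he : {ω | f1 ω ≤ f2 ω} = (fun ω => f2 ω - f1 ω) ⁻¹' Set.Ici 0 := by
        ext ω; simp [sub_nonneg]
      rw [he]; exact h0
    refine ⟨h1m.min h2m, fun k ω => if s + 1 ≤ k then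
      (if f1 ω ≤ f2 ω then ξ1 k ω else ξ2 k ω) else 0, ?_, ?_⟩
    · intro k hk
      by_cases hks : s + 1 ≤ k
      · simp only [if_pos hks]
        have hsm : MeasurableSet[F (k - 1)] {ω | f1 ω ≤ f2 ω} :=
          F.mono (by omega : s ≤ k - 1) _ hsetS
        exact Measurable.ite hsm (hξ1 k hk) (hξ2 k hk)
      · simp only [if_neg hks]
        exact measurable_const
    · have hGa : ∀ ω, Gains X (fun k ω => if s + 1 ≤ k then
          (if f1 ω ≤ f2 ω then ξ1 k ω else ξ2 k ω) else 0) s T ω =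
          if f1 ω ≤ f2 ω then Gains X ξ1 s T ω else Gains X ξ2 s T ω := by
        intro ω
        by_cases h12 : f1 ω ≤ f2 ω
        · rw [if_pos h12]
          apply Finset.sum_congr rfl
          intro k hk
          rw [Finset.mem_Icc] at hk
          simp [if_pos hk.1, if_pos h12, Nat.lt_of_succ_le hk.1]
        · rw [if_neg h12]
          apply Finset.sum_congr rfl
          intro k hk
          rw [Finset.mem_Icc] at hk
          simp [if_pos hk.1, if_neg h12, Nat.lt_of_succ_le hk.1]
      filter_upwards [hs1, hs2] with ω hω1 hω2
      rw [hGa ω]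
      by_cases h12 : f1 ω ≤ f2 ω
      · rw [if_pos h12, min_eq_left h12]; exact hω1
      · rw [if_neg h12, min_eq_right (le_of_not_ge h12)]; exact hω2
  -- clamping to [-C, C]
  set clamp : ℝ → ℝ := fun x => max (min x C) (-C) with hclampdef
  have hclamp_bdd : ∀ x, |clamp x| ≤ C :=
    fun x => abs_le.mpr ⟨le_max_right _ _, max_le (min_le_right x C) (by linarith)⟩
  have hclamp_mono : Monotone clamp :=
    fun a b hab => max_le_max (min_le_min hab le_rfl) le_rfl
  have hclamp_meas : Measurable clamp :=
    ((continuous_id.min continuous_const).max continuous_const).measurable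
  have hclamp_min : ∀ a b, clamp (min a b) = min (clamp a) (clamp b) := by
    intro a b
    rcases le_total a b with hab | hab
    · rw [min_eq_left hab, min_eq_left (hclamp_mono hab)]
    · rw [min_eq_right hab, min_eq_right (hclamp_mono hab)]
  have hint_clamp : ∀ f : Ω → ℝ, Measurable f → Integrable (fun ω => clamp (f ω)) P := by
    intro f hf
    apply Integrable.mono' (integrable_const C) (hclamp_meas.comp hf).aestronglyMeasurable
    filter_upwards with ω
    rw [Real.norm_eq_abs]; exact hclamp_bdd (f ω)
  -- the infimum of clamped integrals
  set Itg : (Ω → ℝ) → ℝ := fun f => ∫ ω, clamp (f ω) ∂P with hItgdef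
  set R : Set ℝ := Itg '' S with hRdef
  have hRne : R.Nonempty := ⟨Itg (fun _ => C), ⟨(fun _ => C), hCin, rfl⟩⟩
  have hRbdd : BddBelow R := by
    refine ⟨-C, ?_⟩
    rintro r ⟨f, hfS, rfl⟩
    have h1 : ∫ ω, (-C : ℝ) ∂P ≤ Itg f := by
      apply integral_mono_ae (integrable_const _) (hint_clamp f (hSm f hfS))
      filter_upwards with ω using le_max_right _ _
    simpa using h1
  set J := sInf R with hJdef
  have hJle : ∀ f ∈ S, J ≤ Itg f := fun f hf => csInf_le hRbdd ⟨f, hf, rfl⟩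
  -- a minimizing sequence
  have hseq : ∀ n : ℕ, ∃ f, f ∈ S ∧ Itg f < J + 1 / ((n : ℝ) + 1) := by
    intro n
    obtain ⟨r, ⟨f, hfS, rfl⟩, hr⟩ := Real.lt_sInf_add_pos hRne
      (show (0:ℝ) < 1 / ((n : ℝ) + 1) by positivity)
    exact ⟨f, hfS, hr⟩
  choose fs hfsS hfslt using hseq
  -- running minima
  set G : ℕ → Ω → ℝ := fun n => Nat.rec (fs 0)
    (fun n Gn => fun ω => min (Gn ω) (fs (n + 1) ω)) n with hGdef
  have hGsucc : ∀ n, G (n + 1) = fun ω => min (G n ω) (fs (n + 1) ω) := fun n => rfl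
  have hGS : ∀ n, G n ∈ S := by
    intro n
    induction n with
    | zero => exact hfsS 0
    | succ n ih => rw [hGsucc]; exact hmin _ _ ih (hfsS (n + 1))
  have hGle_fs : ∀ n ω, G n ω ≤ fs n ω := by
    intro n ω
    cases n with
    | zero => exact le_refl _
    | succ n => exact min_le_right _ _
  have hGanti : ∀ n ω, G (n + 1) ω ≤ G n ω := fun n ω => min_le_left _ _
  -- the clamped running minima and their infimum
  set h' : ℕ → Ω → ℝ := fun n ω => clamp (G n ω) with hh'def
  have hh'anti : ∀ ω, Antitone fun n => h' n ω := fun ω =>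
    antitone_nat_of_succ_le fun n => hclamp_mono (hGanti n ω)
  have hh'bdd : ∀ n ω, |h' n ω| ≤ C := fun n ω => hclamp_bdd _
  have hbddBelow : ∀ ω, BddBelow (Set.range fun n => h' n ω) := by
    intro ω
    refine ⟨-C, ?_⟩
    rintro r ⟨n, rfl⟩
    linarith [(abs_le.mp (hh'bdd n ω)).1]
  set h : Ω → ℝ := fun ω => ⨅ n, h' n ω with hhdef
  have htends : ∀ ω, Filter.Tendsto (fun n => h' n ω) Filter.atTop (nhds (h ω)) :=
    fun ω => tendsto_atTop_ciInf (hh'anti ω) (hbddBelow ω)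
  have hh'meas : ∀ n, Measurable (h' n) := fun n => hclamp_meas.comp (hSm _ (hGS n))
  have hm : Measurable h := by
    apply measurable_of_tendsto_metrizable' Filter.atTop hh'meas
    rw [tendsto_pi_nhds]
    exact htends
  have hhbdd : ∀ ω, |h ω| ≤ C := by
    intro ω
    have h1 : h ω ≤ h' 0 ω := ciInf_le (hbddBelow ω) 0
    have h2 : -C ≤ h ω := le_ciInf fun n => by linarith [(abs_le.mp (hh'bdd n ω)).1]
    have h3 := (abs_le.mp (hh'bdd 0 ω)).2
    exact abs_le.mpr ⟨h2, by linarith⟩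
  -- integrals converge to J
  have hup : ∀ n, ∫ ω, h' n ω ∂P < J + 1 / ((n : ℝ) + 1) := by
    intro n
    have h1 : ∫ ω, h' n ω ∂P ≤ Itg (fs n) := by
      apply integral_mono_ae (hint_clamp _ (hSm _ (hGS n))) (hint_clamp _ (hSm _ (hfsS n)))
      filter_upwards with ω using hclamp_mono (hGle_fs n ω)
    exact lt_of_le_of_lt h1 (hfslt n)
  have hlow : ∀ n, J ≤ ∫ ω, h' n ω ∂P := fun n => hJle _ (hGS n)
  have hint_h : Integrable h P := by
    apply Integrable.mono' (integrable_const C) hm.aestronglyMeasurable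
    filter_upwards with ω
    rw [Real.norm_eq_abs]; exact hhbdd ω
  have htendI : Filter.Tendsto (fun n => ∫ ω, h' n ω ∂P) Filter.atTop (nhds (∫ ω, h ω ∂P)) := by
    apply tendsto_integral_of_dominated_convergence (fun _ => C)
      (fun n => (hh'meas n).aestronglyMeasurable) (integrable_const C)
    · intro n
      filter_upwards with ω
      rw [Real.norm_eq_abs]; exact hh'bdd n ω
    · filter_upwards with ω using htends ω
  have hJlim : Filter.Tendsto (fun n => ∫ ω, h' n ω ∂P) Filter.atTop (nhds J) := by
    have hJ1 : Filter.Tendsto (fun n : ℕ => J + 1 / ((n : ℝ) + 1)) Filter.atTop (nhds J) := by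
      have := (tendsto_const_nhds (x := J) (f := Filter.atTop (α := ℕ))).add
        tendsto_one_div_add_atTop_nhds_zero_nat
      simpa using this
    exact tendsto_of_tendsto_of_tendsto_of_le_of_le tendsto_const_nhds hJ1 hlow
      fun n => le_of_lt (hup n)
  have hIntJ : ∫ ω, h ω ∂P = J := tendsto_nhds_unique htendI hJlim
  -- h is an a.e. lower bound of S
  have hlb_h : ∀ f ∈ S, h ≤ᵐ[P] f := by
    intro f hfS'
    have hfm' := hSm f hfS'
    set q : Ω → ℝ := fun ω => clamp (f ω) with hqdef
    have hqmeas : Measurable q := hclamp_meas.comp hfm'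
    have hqbdd : ∀ ω, |q ω| ≤ C := fun ω => hclamp_bdd _
    have hpJ : ∀ n, J ≤ ∫ ω, min (h' n ω) (q ω) ∂P := by
      intro n
      have h1 : Itg (fun ω => min (G n ω) (f ω)) = ∫ ω, min (h' n ω) (q ω) ∂P := by
        apply integral_congr_ae
        filter_upwards with ω
        exact hclamp_min (G n ω) (f ω)
      rw [← h1]
      exact hJle _ (hmin _ _ (hGS n) hfS')
    have hminmeas : ∀ n, Measurable fun ω => min (h' n ω) (q ω) :=
      fun n => (hh'meas n).min hqmeas
    have htendp : Filter.Tendsto (fun n => ∫ ω, min (h' n ω) (q ω) ∂P) Filter.atTop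
        (nhds (∫ ω, min (h ω) (q ω) ∂P)) := by
      apply tendsto_integral_of_dominated_convergence (fun _ => C)
        (fun n => (hminmeas n).aestronglyMeasurable) (integrable_const C)
      · intro n
        filter_upwards with ω
        rw [Real.norm_eq_abs, abs_le]
        have a1 := abs_le.mp (hh'bdd n ω)
        have a2 := abs_le.mp (hqbdd ω)
        exact ⟨le_min a1.1 a2.1, le_trans (min_le_left _ _) a1.2⟩
      · filter_upwards with ω
        exact (htends ω).min tendsto_const_nhds
    have hgeJ : J ≤ ∫ ω, min (h ω) (q ω) ∂P := ge_of_tendsto' htendp hpJ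
    have hintmin : Integrable (fun ω => min (h ω) (q ω)) P := by
      apply Integrable.mono' (integrable_const C) (hm.min hqmeas).aestronglyMeasurable
      filter_upwards with ω
      rw [Real.norm_eq_abs, abs_le]
      refine ⟨?_, le_trans (min_le_right _ _) (abs_le.mp (hqbdd ω)).2⟩
      rw [le_min_iff]
      exact ⟨by linarith [(abs_le.mp (hhbdd ω)).1], by linarith [(abs_le.mp (hqbdd ω)).1]⟩
    have hled : ∫ ω, min (h ω) (q ω) ∂P ≤ ∫ ω, h ω ∂P := by
      apply integral_mono_ae hintmin hint_h
      filter_upwards with ω using min_le_left _ _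
    have heq : ∫ ω, (h ω - min (h ω) (q ω)) ∂P = 0 := by
      rw [integral_sub hint_h hintmin, hIntJ]
      linarith
    have hd0 : (fun ω => h ω - min (h ω) (q ω)) =ᵐ[P] 0 := by
      have hpos : 0 ≤ᵐ[P] fun ω => h ω - min (h ω) (q ω) := by
        filter_upwards with ω
        simp only [Pi.zero_apply]
        linarith [min_le_left (h ω) (q ω)]
      have hint' : Integrable (fun ω => h ω - min (h ω) (q ω)) P := hint_h.sub hintmin
      exact (integral_eq_zero_iff_of_nonneg_ae hpos hint').mp heq
    have hhq : ∀ᵐ ω ∂P, h ω ≤ q ω := by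
      filter_upwards [hd0] with ω hω
      rw [Pi.zero_apply] at hω
      have : h ω = min (h ω) (q ω) := by linarith
      rw [this]
      exact min_le_right _ _
    filter_upwards [hhq, hlb f hfS'] with ω h1 h2
    rcases le_total (f ω) C with hfC | hfC
    · have : q ω = f ω := by
        rw [hqdef]
        simp only [hclampdef]
        rw [min_eq_left hfC, max_eq_left h2]
      linarith
    · linarith [(abs_le.mp (hhbdd ω)).2]
  -- h is maximal among a.e. lower bounds
  refine ⟨h, hm, hhbdd, hlb_h, ?_⟩
  intro h'' hlb''
  have h1 : ∀ᵐ ω ∂P, ∀ n, h'' ω ≤ fs n ω := ae_all_iff.mpr fun n => hlb'' (fs n) (hfsS n)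
  have h2 : h'' ≤ᵐ[P] fun _ => C := hlb'' _ hCin
  filter_upwards [h1, h2] with ω hω1 hω2
  have hGn : ∀ n, h'' ω ≤ G n ω := by
    intro n
    induction n with
    | zero => exact hω1 0
    | succ n ih =>
      rw [hGsucc]
      exact le_min ih (hω1 (n + 1))
  refine le_ciInf fun n => ?_
  exact le_max_of_le_left (le_min (hGn n) hω2)

/-- For every bounded claim `H ∈ L^∞(P)`, the process of smallest
super-hedging prices `(E_t(H))_t` is a supermartingale under every equivalent
martingale measure `Q`: `E_Q[E_{t+1}(H) | F_t] ≤ E_t(H)`. -/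
theorem superhedging_prices_supermartingale
    {m : MeasurableSpace Ω} {d T : ℕ} (F : Filtration ℕ m)
    (P : Measure Ω) [IsProbabilityMeasure P]
    (X : ℕ → Ω → Fin d → ℝ) (hX : ∀ t, Measurable[F t] (X t))
    (hFT : (F T : MeasurableSpace Ω) = m)
    (hNA : ∃ Q : Measure Ω, IsEMM P Q F X T)
    (H : Ω → ℝ) (hH : Measurable H) (C : ℝ) (hHb : ∀ᵐ ω ∂P, |H ω| ≤ C)
    (Q : Measure Ω) (hQ : IsEMM P Q F X T)
    (t : ℕ) (ht : t + 1 ≤ T)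
    (g g' : Ω → ℝ)
    (hg : IsEssInfOf P (SuperPrices P F X T t H) g)
    (hg' : IsEssInfOf P (SuperPrices P F X T (t + 1) H) g') :
    (Q[g'|F t]) ≤ᵐ[P] g := by
  classical
  obtain ⟨hQprob, hQequiv, hQint, hQmart⟩ := hQ
  haveI := hQprob
  have hPQ : P ≪ Q := Measure.AbsolutelyContinuous.mk fun A _ hA => (hQequiv A).mpr hA
  have hQP : Q ≪ P := Measure.AbsolutelyContinuous.mk fun A _ hA => (hQequiv A).mp hA
  haveI : (ae P).NeBot := ae_neBot.mpr (IsProbabilityMeasure.ne_zero P)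
  obtain ⟨ω0, hω0⟩ := hHb.exists
  have hC : 0 ≤ C := le_trans (abs_nonneg _) hω0
  -- a bounded measurable version of the essential infimum at time t+1
  obtain ⟨h, hm', hhbdd, hEI⟩ := exists_measurable_essinf F P Q X hX T
    ⟨hQprob, hQequiv, hQint, hQmart⟩ H C hC hHb (t + 1) ht
  have hgh : g' =ᵐ[P] h := (hEI.2 g' hg'.1).antisymm (hg'.2 h hEI.1)
  have hghQ : g' =ᵐ[Q] h := hQP.ae_le hgh
  have hint_h : Integrable h Q := by
    apply Integrable.mono' (integrable_const C) hm'.aestronglyMeasurable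
    filter_upwards with ω
    rw [Real.norm_eq_abs]; exact hhbdd ω
  have hint_g' : Integrable g' Q := hint_h.congr hghQ.symm
  -- it suffices to show that `Q[g'|F t]` is an a.e. lower bound of the time-t super-prices
  apply hg.2
  intro f hf
  obtain ⟨hfmeas, ξ, hξ, hsup⟩ := hf
  set ζ : Ω → Fin d → ℝ := ξ (t + 1) with hζdef
  have hζm : Measurable[F t] ζ := by
    have := hξ (t + 1) (by omega)
    simpa using this
  have hζmi : ∀ i, Measurable[F t] fun ω => ζ ω i := fun i => (measurable_pi_apply i).comp hζm
  set Y : Fin d → Ω → ℝ := fun i ω => X (t + 1) ω i - X t ω i with hYdef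
  have hYint : ∀ i, Integrable (Y i) Q := fun i =>
    (hQint (t + 1) ht i).sub (hQint t (by omega) i)
  have hY0 : ∀ i, (Q[Y i|F t]) =ᵐ[Q] 0 := by
    intro i
    have h1 : (Q[(fun ω => X (t + 1) ω i - X t ω i)|F t]) =ᵐ[Q]
        (Q[(fun ω => X (t + 1) ω i)|F t]) - (Q[(fun ω => X t ω i)|F t]) :=
      condExp_sub (hQint (t + 1) ht i) (hQint t (by omega) i) _
    have h2 : (Q[(fun ω => X t ω i)|F t]) = fun ω => X t ω i :=
      condExp_of_stronglyMeasurable (F.le t)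
        (((measurable_pi_apply i).comp (hX t)).stronglyMeasurable)
        (hQint t (by omega) i)
    have h3 := hQmart t (by omega) i
    filter_upwards [h1, h3] with ω hω1 hω3
    rw [Pi.zero_apply, hYdef]
    simp only
    rw [hω1, Pi.sub_apply, h2, hω3]
    ring
  -- the time-(t+1) price obtained by trading one step
  set f' : Ω → ℝ := fun ω => f ω + ∑ i, ζ ω i * Y i ω with hf'def
  have hf'mem : f' ∈ SuperPrices P F X T (t + 1) H := by
    refine ⟨?_, ξ, hξ, ?_⟩
    · apply Measurable.add (hfmeas.mono (F.mono (by omega : t ≤ t + 1)) le_rfl)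
      apply Finset.measurable_sum
      intro i _
      have hζi' : Measurable[F (t + 1)] fun ω => ζ ω i :=
        (hζmi i).mono (F.mono (by omega : t ≤ t + 1)) le_rfl
      have hX1 : Measurable[F (t + 1)] fun ω => X (t + 1) ω i :=
        (measurable_pi_apply i).comp (hX (t + 1))
      have hX0 : Measurable[F (t + 1)] fun ω => X t ω i :=
        (measurable_pi_apply i).comp ((hX t).mono (F.mono (by omega : t ≤ t + 1)) le_rfl)
      exact hζi'.mul (hX1.sub hX0)
    · filter_upwards [hsup] with ω hω
      have hsplit : Gains X ξ t T ω =
          (∑ i, ζ ω i * Y i ω) + Gains X ξ (t + 1) T ω := by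
        have hins : Finset.Icc (t + 1) T = insert (t + 1) (Finset.Icc (t + 2) T) := by
          ext k
          simp only [Finset.mem_Icc, Finset.mem_insert]
          omega
        have hnotmem : (t + 1) ∉ Finset.Icc (t + 2) T := by
          simp [Finset.mem_Icc]
        rw [Gains, Gains, hins, Finset.sum_insert hnotmem]
        simp only [Nat.add_sub_cancel]
        rfl
      rw [hf'def]
      simp only
      rw [add_assoc, ← hsplit]
      exact hω
  have hg'f' : g' ≤ᵐ[Q] f' := hQP.ae_le (hg'.1 f' hf'mem)
  -- localize to sets where `f` and `ζ` are bounded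
  set A : ℕ → Set Ω := fun n =>
    {ω | f ω ∈ Set.Icc (-(n : ℝ)) n ∧ ∀ i, ζ ω i ∈ Set.Icc (-(n : ℝ)) n} with hAdef
  have hAm : ∀ n, MeasurableSet[F t] (A n) := by
    intro n
    have h1 : MeasurableSet[F t] {ω | f ω ∈ Set.Icc (-(n : ℝ)) n} := hfmeas measurableSet_Icc
    have h2 : ∀ i, MeasurableSet[F t] {ω | ζ ω i ∈ Set.Icc (-(n : ℝ)) n} :=
      fun i => (hζmi i) measurableSet_Icc
    have hAe : A n = {ω | f ω ∈ Set.Icc (-(n : ℝ)) n} ∩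
        ⋂ i, {ω | ζ ω i ∈ Set.Icc (-(n : ℝ)) n} := by
      ext ω; simp [hAdef, Set.mem_iInter]
    rw [hAe]
    exact h1.inter (MeasurableSet.iInter fun i => h2 i)
  have key : ∀ n : ℕ, ∀ᵐ ω ∂Q, ω ∈ A n → (Q[g'|F t]) ω ≤ f ω := by
    intro n
    set b : Ω → ℝ := (A n).indicator f with hbdef
    set φ : Fin d → Ω → ℝ := fun i => (A n).indicator (fun ω => ζ ω i) with hφdef
    have hb_sm : StronglyMeasurable[F t] b := (hfmeas.indicator (hAm n)).stronglyMeasurable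
    have hb_bdd : ∀ ω, ‖b ω‖ ≤ n := by
      intro ω
      by_cases hωA : ω ∈ A n
      · rw [hbdef]
        rw [Set.indicator_of_mem hωA, Real.norm_eq_abs, abs_le]
        exact Set.mem_Icc.mp hωA.1
      · rw [hbdef]
        rw [Set.indicator_of_notMem hωA]
        simp
    have hb_int : Integrable b Q := by
      apply Integrable.mono' (integrable_const (n : ℝ))
        (hb_sm.mono (F.le t)).aestronglyMeasurable
      filter_upwards with ω using hb_bdd ω
    have hφ_sm : ∀ i, StronglyMeasurable[F t] (φ i) :=
      fun i => ((hζmi i).indicator (hAm n)).stronglyMeasurable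
    have hφ_bdd : ∀ i ω, ‖φ i ω‖ ≤ n := by
      intro i ω
      by_cases hωA : ω ∈ A n
      · rw [hφdef]
        simp only
        rw [Set.indicator_of_mem hωA, Real.norm_eq_abs, abs_le]
        exact Set.mem_Icc.mp (hωA.2 i)
      · rw [hφdef]
        simp only
        rw [Set.indicator_of_notMem hωA]
        simp
    have hφY_int : ∀ i, Integrable (fun ω => φ i ω * Y i ω) Q := fun i =>
      (hYint i).bdd_mul ((hφ_sm i).mono (F.le t)).aestronglyMeasurable (ae_of_all _ (hφ_bdd i))
    have hsum_int : Integrable (fun ω => ∑ i, φ i ω * Y i ω) Q :=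
      integrable_finset_sum _ fun i _ => hφY_int i
    have hsplit' : ∀ ω, (A n).indicator f' ω = b ω + ∑ i, φ i ω * Y i ω := by
      intro ω
      by_cases hωA : ω ∈ A n
      · rw [Set.indicator_of_mem hωA, hbdef, Set.indicator_of_mem hωA, hf'def]
        simp only
        congr 1
        apply Finset.sum_congr rfl
        intro i _
        rw [hφdef]
        simp only
        rw [Set.indicator_of_mem hωA]
      · rw [Set.indicator_of_notMem hωA, hbdef, Set.indicator_of_notMem hωA]
        rw [Finset.sum_eq_zero fun i _ => by
          rw [hφdef]; simp only; rw [Set.indicator_of_notMem hωA]; ring]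
        ring
    have hAf'_int : Integrable ((A n).indicator f') Q := by
      rw [show (A n).indicator f' = fun ω => b ω + ∑ i, φ i ω * Y i ω from funext hsplit']
      exact hb_int.add hsum_int
    have hind_g' : Integrable ((A n).indicator g') Q :=
      hint_g'.indicator (F.le t _ (hAm n))
    have hmono : (A n).indicator g' ≤ᵐ[Q] (A n).indicator f' := by
      filter_upwards [hg'f'] with ω hω
      by_cases hωA : ω ∈ A n
      · rw [Set.indicator_of_mem hωA, Set.indicator_of_mem hωA]; exact hω
      · rw [Set.indicator_of_notMem hωA, Set.indicator_of_notMem hωA]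
    have c1 : (Q[(A n).indicator g'|F t]) =ᵐ[Q] (A n).indicator (Q[g'|F t]) :=
      condExp_indicator hint_g' (hAm n)
    have c2 : (Q[(A n).indicator f'|F t]) =ᵐ[Q] b := by
      rw [show (A n).indicator f' = b + fun ω => ∑ i, φ i ω * Y i ω from
        funext fun ω => hsplit' ω]
      refine (condExp_add hb_int hsum_int _).trans ?_
      have c4 : (Q[b|F t]) = b :=
        condExp_of_stronglyMeasurable (F.le t) hb_sm hb_int
      have c5 : (Q[(fun ω => ∑ i, φ i ω * Y i ω)|F t]) =ᵐ[Q] 0 := by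
        rw [show (fun ω => ∑ i, φ i ω * Y i ω) = ∑ i, fun ω => φ i ω * Y i ω from
          funext fun ω => by rw [Finset.sum_apply]]
        refine (condExp_finsetSum (fun i _ => hφY_int i) _).trans ?_
        have c7 : ∀ i : Fin d, (Q[(fun ω => φ i ω * Y i ω)|F t]) =ᵐ[Q] 0 := by
          intro i
          refine (condExp_mul_of_stronglyMeasurable_left (hφ_sm i) (hφY_int i) (hYint i)).trans ?_
          filter_upwards [hY0 i] with ω hω
          simp [hω]
        have c8 : ∀ᵐ ω ∂Q, ∀ i : Fin d, (Q[(fun ω => φ i ω * Y i ω)|F t]) ω = 0 :=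
          ae_all_iff.mpr fun i => c7 i
        filter_upwards [c8] with ω hω
        rw [Finset.sum_apply, Pi.zero_apply]
        exact Finset.sum_eq_zero fun i _ => hω i
      filter_upwards [c5] with ω hω
      rw [Pi.add_apply, c4, hω, Pi.zero_apply, add_zero]
    have cmono : (Q[(A n).indicator g'|F t]) ≤ᵐ[Q] (Q[(A n).indicator f'|F t]) :=
      condExp_mono hind_g' hAf'_int hmono
    filter_upwards [cmono, c1, c2] with ω h1 h2 h3
    intro hωA
    rw [h2, h3] at h1
    rw [Set.indicator_of_mem hωA] at h1
    rw [hbdef, Set.indicator_of_mem hωA] at h1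
    exact h1
  have hkeyall : ∀ᵐ ω ∂Q, ∀ n, ω ∈ A n → (Q[g'|F t]) ω ≤ f ω := ae_all_iff.mpr key
  have hfin : ∀ᵐ ω ∂Q, (Q[g'|F t]) ω ≤ f ω := by
    filter_upwards [hkeyall] with ω hω
    obtain ⟨n, hn1, hn2⟩ : ∃ n : ℕ, |f ω| ≤ n ∧ ∀ i, |ζ ω i| ≤ n := by
      refine ⟨⌈|f ω| + ∑ i, |ζ ω i|⌉₊, ?_, fun i => ?_⟩
      · have h2 : |f ω| + ∑ i, |ζ ω i| ≤ (⌈|f ω| + ∑ i, |ζ ω i|⌉₊ : ℝ) := Nat.le_ceil _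
        have h3 : (0:ℝ) ≤ ∑ i, |ζ ω i| := Finset.sum_nonneg fun i _ => abs_nonneg _
        linarith
      · have h1 : |ζ ω i| ≤ ∑ j, |ζ ω j| :=
          Finset.single_le_sum (f := fun j => |ζ ω j|) (fun j _ => abs_nonneg _)
            (Finset.mem_univ i)
        have h2 : |f ω| + ∑ j, |ζ ω j| ≤ (⌈|f ω| + ∑ j, |ζ ω j|⌉₊ : ℝ) := Nat.le_ceil _
        have h3 : (0:ℝ) ≤ |f ω| := abs_nonneg _
        linarith
    exact hω n ⟨Set.mem_Icc.mpr (abs_le.mp hn1), fun i => Set.mem_Icc.mpr (abs_le.mp (hn2 i))⟩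
  exact hPQ.ae_le hfin
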